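/- Let R be a unital ring, e an idempotent with qxe = 0 for all x ∈ R, q = 1 - e, and φ₁ a multiplicative Lie derivation with eφ₁(q)q = 0. Suppose δ : R → R agrees with φ₁ on eRe, on qRq, and on eRq, and is defined by δ(x) = φ₁(exe) + φ₁(exq) + φ₁(qxq). Then δ satisfies the multiplicative Lie derivation identity δ([x,y]) = [δ(x),y] + [x,δ(y)] for all x, y ∈ R, provided φ₁(eRe) ⊆ eRe, φ₁(qRq) ⊆ qRq, and φ₁(eRq) ⊆ eRq. -/

import Mathlib

section AuxCornerLie
variable {R : Type*} [Ring R]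

private lemma kz1 (e u v : R) (h1 : u * e = 0) (h2 : e * v = v) : u * v = 0 := by
  rw [← h2, ← mul_assoc, h1, zero_mul]

private lemma kz2 (e u v : R) (h1 : u * e = u) (h2 : e * v = 0) : u * v = 0 := by
  rw [← h1, mul_assoc, h2, mul_zero]

private lemma phi_zero (φ₁ : R → R)
    (hφ : ∀ x y : R, φ₁ (x * y - y * x) = φ₁ x * y - y * φ₁ x + (x * φ₁ y - φ₁ y * x)) :
    φ₁ 0 = 0 := by
  have h := hφ 0 0
  simpa using h

private lemma addM (e : R) (he : e * e = e) (φ₁ : R → R)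
    (hφ : ∀ x y : R, φ₁ (x * y - y * x) = φ₁ x * y - y * φ₁ x + (x * φ₁ y - φ₁ y * x))
    (hcorner_m : ∀ x : R, φ₁ (e * x * (1 - e)) = e * φ₁ (e * x * (1 - e)) * (1 - e))
    (m n : R) (hml : e * m = m) (hmr : m * e = 0) (hnl : e * n = n) (hnr : n * e = 0) :
    φ₁ (m + n) = φ₁ m + φ₁ n := by
  have heq : e * (1 - e) = 0 := by rw [mul_sub, mul_one, he, sub_self]
  have hqe : (1 - e) * e = 0 := by rw [sub_mul, one_mul, he, sub_self]
  have hmq : m * (1 - e) = m := by rw [mul_sub, mul_one, hmr, sub_zero]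
  have hnq : n * (1 - e) = n := by rw [mul_sub, mul_one, hnr, sub_zero]
  have hqm : (1 - e) * m = 0 := by rw [sub_mul, one_mul, hml, sub_self]
  have hqn : (1 - e) * n = 0 := by rw [sub_mul, one_mul, hnl, sub_self]
  have hmn : m * n = 0 := kz1 e m n hmr hnl
  have hnm : n * m = 0 := kz1 e n m hnr hml
  have hz0 : φ₁ 0 = 0 := phi_zero φ₁ hφ
  have hsm : φ₁ m = e * φ₁ m * (1 - e) := by
    have h := hcorner_m m
    rw [show e * m * (1 - e) = m from by rw [hml, hmq]] at h
    exact h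
  have hsn : φ₁ n = e * φ₁ n * (1 - e) := by
    have h := hcorner_m n
    rw [show e * n * (1 - e) = n from by rw [hnl, hnq]] at h
    exact h
  have hFl : e * φ₁ m = φ₁ m := by
    conv_lhs => rw [hsm]
    rw [← mul_assoc, ← mul_assoc, he, ← hsm]
  have hFr : φ₁ m * e = 0 := by
    conv_lhs => rw [hsm]
    rw [mul_assoc, hqe, mul_zero]
  have hGl : e * φ₁ n = φ₁ n := by
    conv_lhs => rw [hsn]
    rw [← mul_assoc, ← mul_assoc, he, ← hsn]
  have hGr : φ₁ n * e = 0 := by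
    conv_lhs => rw [hsn]
    rw [mul_assoc, hqe, mul_zero]
  have hFq : φ₁ m * (1 - e) = φ₁ m := by rw [mul_sub, mul_one, hFr, sub_zero]
  have hqF : (1 - e) * φ₁ m = 0 := by rw [sub_mul, one_mul, hFl, sub_self]
  have hc1 : (e + m) * (n + (1 - e)) - (n + (1 - e)) * (e + m) = m + n := by
    have e1 : (e + m) * (n + (1 - e)) - (n + (1 - e)) * (e + m)
        = e * n + e * (1 - e) + (m * n + m * (1 - e))
          - (n * e + n * m + ((1 - e) * e + (1 - e) * m)) := by noncomm_ring
    rw [e1, heq, hqe, hnl, hnr, hmn, hnm, hmq, hqm]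
    abel
  have hA := hφ (e + m) (n + (1 - e))
  rw [hc1] at hA
  have hc2 : (e + m) * (1 - e) - (1 - e) * (e + m) = m := by
    have e1 : (e + m) * (1 - e) - (1 - e) * (e + m)
        = e * (1 - e) + m * (1 - e) - ((1 - e) * e + (1 - e) * m) := by noncomm_ring
    rw [e1, heq, hmq, hqe, hqm]
    abel
  have hB := hφ (e + m) (1 - e)
  rw [hc2] at hB
  have hc3 : e * (n + (1 - e)) - (n + (1 - e)) * e = n := by
    have e1 : e * (n + (1 - e)) - (n + (1 - e)) * e
        = e * n + e * (1 - e) - (n * e + (1 - e) * e) := by noncomm_ring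
    rw [e1, hnl, heq, hnr, hqe]
    abel
  have hC := hφ e (n + (1 - e))
  rw [hc3] at hC
  have hc4 : e * (1 - e) - (1 - e) * e = 0 := by rw [heq, hqe, sub_zero]
  have hD := hφ e (1 - e)
  rw [hc4, hz0] at hD
  have hc5 : (e + m) * n - n * (e + m) = n := by
    have e1 : (e + m) * n - n * (e + m) = e * n + m * n - (n * e + n * m) := by noncomm_ring
    rw [e1, hnl, hmn, hnr, hnm]
    abel
  have hE := hφ (e + m) n
  rw [hc5] at hE
  have r1 : (e + m) * φ₁ n - φ₁ n * (e + m) = φ₁ n := by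
    have e1 : (e + m) * φ₁ n - φ₁ n * (e + m)
        = e * φ₁ n + m * φ₁ n - (φ₁ n * e + φ₁ n * m) := by noncomm_ring
    rw [e1, hGl, hGr, kz1 e m (φ₁ n) hmr hGl, kz1 e (φ₁ n) m hGr hml]
    abel
  rw [r1] at hE
  have hun : φ₁ (e + m) * n - n * φ₁ (e + m) = 0 := by
    have h := hE.symm
    rwa [add_eq_right] at h
  have hc6 : e * n - n * e = n := by rw [hnl, hnr, sub_zero]
  have hF := hφ e n
  rw [hc6] at hF
  have r2 : e * φ₁ n - φ₁ n * e = φ₁ n := by rw [hGl, hGr, sub_zero]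
  rw [r2] at hF
  have hpn : φ₁ e * n - n * φ₁ e = 0 := by
    have h := hF.symm
    rwa [add_eq_right] at h
  have hc7 : m * (n + (1 - e)) - (n + (1 - e)) * m = m := by
    have e1 : m * (n + (1 - e)) - (n + (1 - e)) * m
        = m * n + m * (1 - e) - (n * m + (1 - e) * m) := by noncomm_ring
    rw [e1, hmn, hmq, hnm, hqm]
    abel
  have hG := hφ m (n + (1 - e))
  rw [hc7] at hG
  have r3 : φ₁ m * (n + (1 - e)) - (n + (1 - e)) * φ₁ m = φ₁ m := by
    have e1 : φ₁ m * (n + (1 - e)) - (n + (1 - e)) * φ₁ m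
        = φ₁ m * n + φ₁ m * (1 - e) - (n * φ₁ m + (1 - e) * φ₁ m) := by noncomm_ring
    rw [e1, kz1 e (φ₁ m) n hFr hnl, hFq, kz1 e n (φ₁ m) hnr hFl, hqF]
    abel
  rw [r3] at hG
  have hmv : m * φ₁ (n + (1 - e)) - φ₁ (n + (1 - e)) * m = 0 := by
    rwa [left_eq_add] at hG
  have hc8 : m * (1 - e) - (1 - e) * m = m := by rw [hmq, hqm, sub_zero]
  have hH := hφ m (1 - e)
  rw [hc8] at hH
  have r4 : φ₁ m * (1 - e) - (1 - e) * φ₁ m = φ₁ m := by rw [hFq, hqF, sub_zero]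
  rw [r4] at hH
  have hmr' : m * φ₁ (1 - e) - φ₁ (1 - e) * m = 0 := by
    rwa [left_eq_add] at hH
  rw [hA, hB, hC, ← sub_eq_zero]
  have e9 : φ₁ (e + m) * (n + (1 - e)) - (n + (1 - e)) * φ₁ (e + m)
        + ((e + m) * φ₁ (n + (1 - e)) - φ₁ (n + (1 - e)) * (e + m))
      - (φ₁ (e + m) * (1 - e) - (1 - e) * φ₁ (e + m)
          + ((e + m) * φ₁ (1 - e) - φ₁ (1 - e) * (e + m))
        + (φ₁ e * (n + (1 - e)) - (n + (1 - e)) * φ₁ e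
          + (e * φ₁ (n + (1 - e)) - φ₁ (n + (1 - e)) * e)))
      = (φ₁ (e + m) * n - n * φ₁ (e + m)) - (φ₁ e * n - n * φ₁ e)
        + (m * φ₁ (n + (1 - e)) - φ₁ (n + (1 - e)) * m)
        - (m * φ₁ (1 - e) - φ₁ (1 - e) * m)
        - (φ₁ e * (1 - e) - (1 - e) * φ₁ e + (e * φ₁ (1 - e) - φ₁ (1 - e) * e)) := by
    noncomm_ring
  rw [e9, hun, hpn, hmv, hmr', ← hD]
  simp

private lemma negM (e : R) (he : e * e = e) (φ₁ : R → R)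
    (hφ : ∀ x y : R, φ₁ (x * y - y * x) = φ₁ x * y - y * φ₁ x + (x * φ₁ y - φ₁ y * x))
    (hcorner_m : ∀ x : R, φ₁ (e * x * (1 - e)) = e * φ₁ (e * x * (1 - e)) * (1 - e))
    (m : R) (hml : e * m = m) (hmr : m * e = 0) :
    φ₁ (-m) = -φ₁ m := by
  have h := addM e he φ₁ hφ hcorner_m m (-m) hml hmr
    (by rw [mul_neg, hml]) (by rw [neg_mul, hmr, neg_zero])
  rw [add_neg_cancel, phi_zero φ₁ hφ] at h
  exact (neg_eq_of_add_eq_zero_right h.symm).symm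

private lemma corner_identity (e x y a1 m1 b1 a2 m2 b2 A1 M1 B1 A2 M2 B2 : R)
    (hx : x = a1 + m1 + b1) (hy : y = a2 + m2 + b2)
    (ha1l : e * a1 = a1) (ha1r : a1 * e = a1)
    (hm1l : e * m1 = m1) (hm1r : m1 * e = 0)
    (hb1l : e * b1 = 0) (hb1r : b1 * e = 0)
    (ha2l : e * a2 = a2) (ha2r : a2 * e = a2)
    (hm2l : e * m2 = m2) (hm2r : m2 * e = 0)
    (hb2l : e * b2 = 0) (hb2r : b2 * e = 0)
    (hA1l : e * A1 = A1) (hA1r : A1 * e = A1)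
    (hM1l : e * M1 = M1) (hM1r : M1 * e = 0)
    (hB1l : e * B1 = 0) (hB1r : B1 * e = 0)
    (hA2l : e * A2 = A2) (hA2r : A2 * e = A2)
    (hM2l : e * M2 = M2) (hM2r : M2 * e = 0)
    (hB2l : e * B2 = 0) (hB2r : B2 * e = 0) :
    A1 * a2 - a2 * A1 + (a1 * A2 - A2 * a1)
      + ((A1 * m2 - m2 * A1 + (a1 * M2 - M2 * a1))
          + (M1 * b2 - b2 * M1 + (m1 * B2 - B2 * m1))
        + (-(A2 * m1 - m1 * A2 + (a2 * M1 - M1 * a2))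
          + -(M2 * b1 - b1 * M2 + (m2 * B1 - B1 * m2))))
      + (B1 * b2 - b2 * B1 + (b1 * B2 - B2 * b1))
    = (A1 + M1 + B1) * y - y * (A1 + M1 + B1)
      + (x * (A2 + M2 + B2) - (A2 + M2 + B2) * x) := by
  subst hx; subst hy
  have z01 : A1 * b2 = 0 := kz2 e A1 b2 hA1r hb2l
  have z02 : a1 * B2 = 0 := kz2 e a1 B2 ha1r hB2l
  have z03 : A2 * b1 = 0 := kz2 e A2 b1 hA2r hb1l
  have z04 : a2 * B1 = 0 := kz2 e a2 B1 ha2r hB1l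
  have z05 : M1 * a2 = 0 := kz1 e M1 a2 hM1r ha2l
  have z06 : m2 * A1 = 0 := kz1 e m2 A1 hm2r hA1l
  have z07 : m1 * A2 = 0 := kz1 e m1 A2 hm1r hA2l
  have z08 : M2 * a1 = 0 := kz1 e M2 a1 hM2r ha1l
  have z09 : M1 * m2 = 0 := kz1 e M1 m2 hM1r hm2l
  have z10 : m2 * M1 = 0 := kz1 e m2 M1 hm2r hM1l
  have z11 : m1 * M2 = 0 := kz1 e m1 M2 hm1r hM2l
  have z12 : M2 * m1 = 0 := kz1 e M2 m1 hM2r hm1l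
  have z13 : B1 * a2 = 0 := kz1 e B1 a2 hB1r ha2l
  have z14 : b2 * A1 = 0 := kz1 e b2 A1 hb2r hA1l
  have z15 : b1 * A2 = 0 := kz1 e b1 A2 hb1r hA2l
  have z16 : B2 * a1 = 0 := kz1 e B2 a1 hB2r ha1l
  have z17 : B1 * m2 = 0 := kz1 e B1 m2 hB1r hm2l
  have z18 : b2 * M1 = 0 := kz1 e b2 M1 hb2r hM1l
  have z19 : b1 * M2 = 0 := kz1 e b1 M2 hb1r hM2l
  have z20 : B2 * m1 = 0 := kz1 e B2 m1 hB2r hm1l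
  simp only [mul_add, add_mul, z01, z02, z03, z04, z05, z06, z07, z08, z09, z10,
    z11, z12, z13, z14, z15, z16, z17, z18, z19, z20, add_zero, zero_add,
    sub_zero, zero_sub]
  abel

end AuxCornerLie

theorem corner_sum_is_mult_lie_derivation (R : Type*) [Ring R] (e : R) (he : e * e = e)
    (htri : ∀ x : R, (1 - e) * x * e = 0) (φ₁ : R → R)
    (hφ : ∀ x y : R, φ₁ (x * y - y * x) = φ₁ x * y - y * φ₁ x + (x * φ₁ y - φ₁ y * x))
    (h0 : e * φ₁ (1 - e) * (1 - e) = 0)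
    (hcorner_e : ∀ x : R, φ₁ (e * x * e) = e * φ₁ (e * x * e) * e)
    (hcorner_q : ∀ x : R, φ₁ ((1 - e) * x * (1 - e)) = (1 - e) * φ₁ ((1 - e) * x * (1 - e)) * (1 - e))
    (hcorner_m : ∀ x : R, φ₁ (e * x * (1 - e)) = e * φ₁ (e * x * (1 - e)) * (1 - e))
    (hadd_e : ∀ a a' : R, a = e * a * e → a' = e * a' * e → φ₁ (a + a') = φ₁ a + φ₁ a')
    (hadd_q : ∀ b b' : R, b = (1 - e) * b * (1 - e) → b' = (1 - e) * b' * (1 - e) →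
      φ₁ (b + b') = φ₁ b + φ₁ b')
    (δ : R → R)
    (hδ : ∀ x : R, δ x = φ₁ (e * x * e) + φ₁ (e * x * (1 - e)) + φ₁ ((1 - e) * x * (1 - e))) :
    ∀ x y : R, δ (x * y - y * x) = δ x * y - y * δ x + (x * δ y - δ y * x) := by
  intro x y
  have heq : e * (1 - e) = 0 := by rw [mul_sub, mul_one, he, sub_self]
  have hqe : (1 - e) * e = 0 := by rw [sub_mul, one_mul, he, sub_self]
  have hqq : (1 - e) * (1 - e) = 1 - e := by rw [mul_sub, mul_one, hqe, sub_zero]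
  -- sandwich product lemmas
  have eProdE : ∀ a b : R, e * (a * b) * e = (e * a * e) * (e * b * e) := by
    intro a b
    have h1 : (e * a * e) * (e * b * e) = e * a * (e * e * (b * e)) := by noncomm_ring
    have h2 : e * (a * b) * e = e * a * (e * (b * e)) + (e * a) * ((1 - e) * b * e) := by
      noncomm_ring
    rw [h1, he, h2, htri b, mul_zero, add_zero]
  have eProdM : ∀ a b : R,
      e * (a * b) * (1 - e)
        = (e * a * e) * (e * b * (1 - e)) + (e * a * (1 - e)) * ((1 - e) * b * (1 - e)) := by
    intro a b
    have h1 : (e * a * e) * (e * b * (1 - e)) + (e * a * (1 - e)) * ((1 - e) * b * (1 - e))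
        = e * a * (e * e * (b * (1 - e))) + e * a * ((1 - e) * (1 - e) * (b * (1 - e))) := by
      noncomm_ring
    have h2 : e * (a * b) * (1 - e)
        = e * a * (e * (b * (1 - e))) + e * a * ((1 - e) * (b * (1 - e))) := by noncomm_ring
    rw [h1, he, hqq, h2]
  have eProdQ : ∀ a b : R,
      (1 - e) * (a * b) * (1 - e) = ((1 - e) * a * (1 - e)) * ((1 - e) * b * (1 - e)) := by
    intro a b
    have h1 : ((1 - e) * a * (1 - e)) * ((1 - e) * b * (1 - e))
        = (1 - e) * a * ((1 - e) * (1 - e) * (b * (1 - e))) := by noncomm_ring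
    have h2 : (1 - e) * (a * b) * (1 - e)
        = ((1 - e) * a * e) * (b * (1 - e)) + (1 - e) * a * ((1 - e) * (b * (1 - e))) := by
      noncomm_ring
    rw [h1, hqq, h2, htri a, zero_mul, zero_add]
  -- decompositions of x and y
  have hxd : x = e * x * e + e * x * (1 - e) + (1 - e) * x * (1 - e) := by
    have h1 : e * x * e + e * x * (1 - e) + (1 - e) * x * (1 - e) = x - (1 - e) * x * e := by
      noncomm_ring
    rw [h1, htri x, sub_zero]
  have hyd : y = e * y * e + e * y * (1 - e) + (1 - e) * y * (1 - e) := by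
    have h1 : e * y * e + e * y * (1 - e) + (1 - e) * y * (1 - e) = y - (1 - e) * y * e := by
      noncomm_ring
    rw [h1, htri y, sub_zero]
  -- atom membership facts
  have ha1l : e * (e * x * e) = e * x * e := by rw [← mul_assoc, ← mul_assoc, he]
  have ha1r : (e * x * e) * e = e * x * e := by rw [mul_assoc, he]
  have hm1l : e * (e * x * (1 - e)) = e * x * (1 - e) := by rw [← mul_assoc, ← mul_assoc, he]
  have hm1r : (e * x * (1 - e)) * e = 0 := by rw [mul_assoc, hqe, mul_zero]
  have hb1l : e * ((1 - e) * x * (1 - e)) = 0 := by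
    rw [← mul_assoc, ← mul_assoc, heq, zero_mul, zero_mul]
  have hb1r : ((1 - e) * x * (1 - e)) * e = 0 := by rw [mul_assoc, hqe, mul_zero]
  have ha2l : e * (e * y * e) = e * y * e := by rw [← mul_assoc, ← mul_assoc, he]
  have ha2r : (e * y * e) * e = e * y * e := by rw [mul_assoc, he]
  have hm2l : e * (e * y * (1 - e)) = e * y * (1 - e) := by rw [← mul_assoc, ← mul_assoc, he]
  have hm2r : (e * y * (1 - e)) * e = 0 := by rw [mul_assoc, hqe, mul_zero]
  have hb2l : e * ((1 - e) * y * (1 - e)) = 0 := by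
    rw [← mul_assoc, ← mul_assoc, heq, zero_mul, zero_mul]
  have hb2r : ((1 - e) * y * (1 - e)) * e = 0 := by rw [mul_assoc, hqe, mul_zero]
  -- φ-value membership facts
  have sandL : ∀ u : R, u = e * u * e → e * u = u := by
    intro u h
    conv_lhs => rw [h]
    rw [← mul_assoc, ← mul_assoc, he, ← h]
  have sandR : ∀ u : R, u = e * u * e → u * e = u := by
    intro u h
    conv_lhs => rw [h]
    rw [mul_assoc, he, ← h]
  have sandML : ∀ u : R, u = e * u * (1 - e) → e * u = u := by
    intro u h
    conv_lhs => rw [h]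
    rw [← mul_assoc, ← mul_assoc, he, ← h]
  have sandMR : ∀ u : R, u = e * u * (1 - e) → u * e = 0 := by
    intro u h
    conv_lhs => rw [h]
    rw [mul_assoc, hqe, mul_zero]
  have sandQL : ∀ u : R, u = (1 - e) * u * (1 - e) → e * u = 0 := by
    intro u h
    conv_lhs => rw [h]
    rw [← mul_assoc, ← mul_assoc, heq, zero_mul, zero_mul]
  have sandQR : ∀ u : R, u = (1 - e) * u * (1 - e) → u * e = 0 := by
    intro u h
    conv_lhs => rw [h]
    rw [mul_assoc, hqe, mul_zero]
  have hA1l := sandL _ (hcorner_e x)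
  have hA1r := sandR _ (hcorner_e x)
  have hM1l := sandML _ (hcorner_m x)
  have hM1r := sandMR _ (hcorner_m x)
  have hB1l := sandQL _ (hcorner_q x)
  have hB1r := sandQR _ (hcorner_q x)
  have hA2l := sandL _ (hcorner_e y)
  have hA2r := sandR _ (hcorner_e y)
  have hM2l := sandML _ (hcorner_m y)
  have hM2r := sandMR _ (hcorner_m y)
  have hB2l := sandQL _ (hcorner_q y)
  have hB2r := sandQR _ (hcorner_q y)
  -- membership of the four eRq products
  have p1l : e * ((e * x * e) * (e * y * (1 - e))) = (e * x * e) * (e * y * (1 - e)) := by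
    rw [← mul_assoc, ha1l]
  have p1r : ((e * x * e) * (e * y * (1 - e))) * e = 0 := by rw [mul_assoc, hm2r, mul_zero]
  have p2l : e * ((e * x * (1 - e)) * ((1 - e) * y * (1 - e)))
      = (e * x * (1 - e)) * ((1 - e) * y * (1 - e)) := by rw [← mul_assoc, hm1l]
  have p2r : ((e * x * (1 - e)) * ((1 - e) * y * (1 - e))) * e = 0 := by
    rw [mul_assoc, hb2r, mul_zero]
  have p3l : e * ((e * y * e) * (e * x * (1 - e))) = (e * y * e) * (e * x * (1 - e)) := by
    rw [← mul_assoc, ha2l]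
  have p3r : ((e * y * e) * (e * x * (1 - e))) * e = 0 := by rw [mul_assoc, hm1r, mul_zero]
  have p4l : e * ((e * y * (1 - e)) * ((1 - e) * x * (1 - e)))
      = (e * y * (1 - e)) * ((1 - e) * x * (1 - e)) := by rw [← mul_assoc, hm2l]
  have p4r : ((e * y * (1 - e)) * ((1 - e) * x * (1 - e))) * e = 0 := by
    rw [mul_assoc, hb1r, mul_zero]
  -- sandwich of the commutator
  have hee : e * (x * y - y * x) * e
      = (e * x * e) * (e * y * e) - (e * y * e) * (e * x * e) := by
    have h1 : e * (x * y - y * x) * e = e * (x * y) * e - e * (y * x) * e := by noncomm_ring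
    rw [h1, eProdE x y, eProdE y x]
  have hqqc : (1 - e) * (x * y - y * x) * (1 - e)
      = ((1 - e) * x * (1 - e)) * ((1 - e) * y * (1 - e))
        - ((1 - e) * y * (1 - e)) * ((1 - e) * x * (1 - e)) := by
    have h1 : (1 - e) * (x * y - y * x) * (1 - e)
        = (1 - e) * (x * y) * (1 - e) - (1 - e) * (y * x) * (1 - e) := by noncomm_ring
    rw [h1, eProdQ x y, eProdQ y x]
  have hmidc : e * (x * y - y * x) * (1 - e)
      = (e * x * e) * (e * y * (1 - e)) + (e * x * (1 - e)) * ((1 - e) * y * (1 - e))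
        + (-((e * y * e) * (e * x * (1 - e)))
          + -((e * y * (1 - e)) * ((1 - e) * x * (1 - e)))) := by
    have h1 : e * (x * y - y * x) * (1 - e)
        = e * (x * y) * (1 - e) - e * (y * x) * (1 - e) := by noncomm_ring
    rw [h1, eProdM x y, eProdM y x]
    abel
  -- additivity applications
  have split1 : φ₁ ((e * x * e) * (e * y * (1 - e))
        + (e * x * (1 - e)) * ((1 - e) * y * (1 - e))
      + (-((e * y * e) * (e * x * (1 - e)))
        + -((e * y * (1 - e)) * ((1 - e) * x * (1 - e)))))
      = φ₁ ((e * x * e) * (e * y * (1 - e)) + (e * x * (1 - e)) * ((1 - e) * y * (1 - e)))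
        + φ₁ (-((e * y * e) * (e * x * (1 - e)))
          + -((e * y * (1 - e)) * ((1 - e) * x * (1 - e)))) :=
    addM e he φ₁ hφ hcorner_m _ _
      (by rw [mul_add, p1l, p2l]) (by rw [add_mul, p1r, p2r, add_zero])
      (by rw [mul_add, mul_neg, mul_neg, p3l, p4l])
      (by rw [add_mul, neg_mul, neg_mul, p3r, p4r, neg_zero, add_zero])
  have split2 : φ₁ ((e * x * e) * (e * y * (1 - e))
        + (e * x * (1 - e)) * ((1 - e) * y * (1 - e)))
      = φ₁ ((e * x * e) * (e * y * (1 - e)))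
        + φ₁ ((e * x * (1 - e)) * ((1 - e) * y * (1 - e))) :=
    addM e he φ₁ hφ hcorner_m _ _ p1l p1r p2l p2r
  have split3 : φ₁ (-((e * y * e) * (e * x * (1 - e)))
        + -((e * y * (1 - e)) * ((1 - e) * x * (1 - e))))
      = φ₁ (-((e * y * e) * (e * x * (1 - e))))
        + φ₁ (-((e * y * (1 - e)) * ((1 - e) * x * (1 - e)))) :=
    addM e he φ₁ hφ hcorner_m _ _
      (by rw [mul_neg, p3l]) (by rw [neg_mul, p3r, neg_zero])
      (by rw [mul_neg, p4l]) (by rw [neg_mul, p4r, neg_zero])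
  have neg1 : φ₁ (-((e * y * e) * (e * x * (1 - e))))
      = -φ₁ ((e * y * e) * (e * x * (1 - e))) :=
    negM e he φ₁ hφ hcorner_m _ p3l p3r
  have neg2 : φ₁ (-((e * y * (1 - e)) * ((1 - e) * x * (1 - e))))
      = -φ₁ ((e * y * (1 - e)) * ((1 - e) * x * (1 - e))) :=
    negM e he φ₁ hφ hcorner_m _ p4l p4r
  -- hφ expansions on single products
  have haa := hφ (e * x * e) (e * y * e)
  have hbb := hφ ((1 - e) * x * (1 - e)) ((1 - e) * y * (1 - e))
  have zq1 : (e * y * (1 - e)) * (e * x * e) = 0 := kz1 e _ _ hm2r ha1l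
  have hq1 := hφ (e * x * e) (e * y * (1 - e))
  rw [zq1, sub_zero] at hq1
  have zq2 : ((1 - e) * y * (1 - e)) * (e * x * (1 - e)) = 0 := kz1 e _ _ hb2r hm1l
  have hq2 := hφ (e * x * (1 - e)) ((1 - e) * y * (1 - e))
  rw [zq2, sub_zero] at hq2
  have zq3 : (e * x * (1 - e)) * (e * y * e) = 0 := kz1 e _ _ hm1r ha2l
  have hq3 := hφ (e * y * e) (e * x * (1 - e))
  rw [zq3, sub_zero] at hq3
  have zq4 : ((1 - e) * x * (1 - e)) * (e * y * (1 - e)) = 0 := kz1 e _ _ hb1r hm2l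
  have hq4 := hφ (e * y * (1 - e)) ((1 - e) * x * (1 - e))
  rw [zq4, sub_zero] at hq4
  -- assemble δ of the commutator
  have hdc := hδ (x * y - y * x)
  rw [hee, hmidc, hqqc, split1, split2, split3, neg1, neg2, haa, hq1, hq2, hq3, hq4, hbb] at hdc
  rw [hdc, hδ x, hδ y]
  exact corner_identity e x y (e * x * e) (e * x * (1 - e)) ((1 - e) * x * (1 - e))
    (e * y * e) (e * y * (1 - e)) ((1 - e) * y * (1 - e))
    (φ₁ (e * x * e)) (φ₁ (e * x * (1 - e))) (φ₁ ((1 - e) * x * (1 - e)))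
    (φ₁ (e * y * e)) (φ₁ (e * y * (1 - e))) (φ₁ ((1 - e) * y * (1 - e)))
    hxd hyd ha1l ha1r hm1l hm1r hb1l hb1r ha2l ha2r hm2l hm2r hb2l hb2r
    hA1l hA1r hM1l hM1r hB1l hB1r hA2l hA2r hM2l hM2r hB2l hB2r
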